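/- For every s ≥ 0, the lowest eigenvalue μ_π(s) of the twisted operator T̂_π^s is strictly greater than 1/4: if v ∈ H¹(Ω) ∩ L²(Ω, y_1² dy) vanishes on Γ_π^D and satisfies Ĵ_π^s[v] = (1/4)‖v‖², then v = 0. -/

import Mathlib

set_option maxHeartbeats 1600000

open Real MeasureTheory intervalIntegral

/-- Partial derivative in the first variable. -/
noncomputable def pd1 (f : ℝ × ℝ → ℝ) (p : ℝ × ℝ) : ℝ := deriv (fun t => f (t, p.2)) p.1

/-- Partial derivative in the second variable. -/
noncomputable def pd2 (f : ℝ × ℝ → ℝ) (p : ℝ × ℝ) : ℝ := deriv (fun t => f (p.1, t)) p.2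

/-- The strip `Ω = ℝ × (-a,a)`. -/
def strip (a : ℝ) : Set (ℝ × ℝ) := Set.univ ×ˢ Set.Ioo (-a) a

/-- The quadratic form
`Ĵ^s[v] = ‖∂₁v‖² + (1/16)‖y₁v‖² + e^s‖∂₂v‖² - E₁e^s‖v‖²` on the strip. -/
noncomputable def Jhat (a s : ℝ) (v : ℝ × ℝ → ℝ) : ℝ :=
  (∫ p in strip a, (pd1 v p) ^ 2) + (1 / 16) * (∫ p in strip a, (p.1 * v p) ^ 2)
    + Real.exp s * (∫ p in strip a, (pd2 v p) ^ 2)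
    - (π / (4 * a)) ^ 2 * Real.exp s * (∫ p in strip a, (v p) ^ 2)

section aux

variable {v : ℝ × ℝ → ℝ}

lemma hasDerivAt_slice1 (hv : ContDiff ℝ 1 v) (y2 t : ℝ) :
    HasDerivAt (fun s => v (s, y2)) (fderiv ℝ v (t, y2) ((1 : ℝ), (0 : ℝ))) t := by
  have h1 : HasFDerivAt v (fderiv ℝ v (t, y2)) (t, y2) :=
    (hv.differentiable one_ne_zero (t, y2)).hasFDerivAt
  have h2 : HasDerivAt (fun s : ℝ => (s, y2)) ((1 : ℝ), (0 : ℝ)) t :=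
    (hasDerivAt_id t).prodMk (hasDerivAt_const t y2)
  exact h1.comp_hasDerivAt t h2

lemma hasDerivAt_slice2 (hv : ContDiff ℝ 1 v) (y1 t : ℝ) :
    HasDerivAt (fun s => v (y1, s)) (fderiv ℝ v (y1, t) ((0 : ℝ), (1 : ℝ))) t := by
  have h1 : HasFDerivAt v (fderiv ℝ v (y1, t)) (y1, t) :=
    (hv.differentiable one_ne_zero (y1, t)).hasFDerivAt
  have h2 : HasDerivAt (fun s : ℝ => (y1, s)) ((0 : ℝ), (1 : ℝ)) t :=
    (hasDerivAt_const t y1).prodMk (hasDerivAt_id t)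
  exact h1.comp_hasDerivAt t h2

lemma pd1_eq (hv : ContDiff ℝ 1 v) (p : ℝ × ℝ) :
    pd1 v p = fderiv ℝ v p ((1 : ℝ), (0 : ℝ)) := by
  have := (hasDerivAt_slice1 hv p.2 p.1).deriv
  simpa [pd1] using this

lemma pd2_eq (hv : ContDiff ℝ 1 v) (p : ℝ × ℝ) :
    pd2 v p = fderiv ℝ v p ((0 : ℝ), (1 : ℝ)) := by
  have := (hasDerivAt_slice2 hv p.1 p.2).deriv
  simpa [pd2] using this

lemma continuous_pd1 (hv : ContDiff ℝ 1 v) : Continuous (pd1 v) := by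
  have : (pd1 v) = fun p => fderiv ℝ v p ((1 : ℝ), (0 : ℝ)) := funext (pd1_eq hv)
  rw [this]
  exact (hv.continuous_fderiv one_ne_zero).clm_apply continuous_const

lemma continuous_pd2 (hv : ContDiff ℝ 1 v) : Continuous (pd2 v) := by
  have : (pd2 v) = fun p => fderiv ℝ v p ((0 : ℝ), (1 : ℝ)) := funext (pd2_eq hv)
  rw [this]
  exact (hv.continuous_fderiv one_ne_zero).clm_apply continuous_const

/-- Sharp Poincaré inequality with Dirichlet condition at the left endpoint only. -/
lemma mixed_poincare (a : ℝ) (ha : 0 < a) (u : ℝ → ℝ) (hu : ContDiff ℝ 1 u)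
    (h0 : u (-a) = 0) :
    (π / (4 * a)) ^ 2 * ∫ y in (-a)..a, (u y) ^ 2 ≤ ∫ y in (-a)..a, (deriv u y) ^ 2 := by
  set k : ℝ := π / (4 * a) with hk
  have hkpos : 0 < k := div_pos Real.pi_pos (by linarith)
  set θ : ℝ → ℝ := fun y => k * (y + a) with hθ
  -- positivity of sin (θ y) on (-a, a]
  have hθval : ∀ y : ℝ, -a < y → y ≤ a → 0 < θ y ∧ θ y ≤ π / 2 := by
    intro y h1 h2
    constructor
    · exact mul_pos hkpos (by linarith)
    · have : θ y ≤ k * (2 * a) := by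
        apply mul_le_mul_of_nonneg_left (by linarith) hkpos.le
      calc θ y ≤ k * (2 * a) := this
        _ = π / 2 := by rw [hk]; field_simp; ring
  have hsinpos : ∀ y : ℝ, -a < y → y ≤ a → 0 < Real.sin (θ y) := by
    intro y h1 h2
    obtain ⟨hp, hle⟩ := hθval y h1 h2
    exact Real.sin_pos_of_pos_of_lt_pi hp (lt_of_le_of_lt hle (by linarith [Real.pi_pos]))
  set ρ : ℝ → ℝ := fun y => k * (Real.cos (θ y) / Real.sin (θ y)) with hρ
  -- derivative facts
  have hθd : ∀ y : ℝ, HasDerivAt θ k y := by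
    intro y
    simpa using ((hasDerivAt_id y).add_const a).const_mul k
  have hρd : ∀ y : ℝ, -a < y → y ≤ a →
      HasDerivAt ρ (-(k ^ 2) / (Real.sin (θ y)) ^ 2) y := by
    intro y h1 h2
    have hs := hsinpos y h1 h2
    have hcos : HasDerivAt (fun t => Real.cos (θ t)) (-Real.sin (θ y) * k) y :=
      (Real.hasDerivAt_cos (θ y)).comp y (hθd y)
    have hsin : HasDerivAt (fun t => Real.sin (θ t)) (Real.cos (θ y) * k) y :=
      (Real.hasDerivAt_sin (θ y)).comp y (hθd y)
    have hdiv := hcos.div hsin hs.ne'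
    have := hdiv.const_mul k
    convert! this using 1
    have h := Real.sin_sq_add_cos_sq (θ y)
    have hnum : -Real.sin (θ y) * k * Real.sin (θ y)
        - Real.cos (θ y) * (Real.cos (θ y) * k) = -k := by nlinarith [h]
    rw [hnum]
    field_simp
  -- the function whose derivative we integrate
  set F : ℝ → ℝ := fun y => ρ y * (u y) ^ 2 with hF
  have hud : ∀ y : ℝ, HasDerivAt u (deriv u y) y :=
    fun y => (hu.differentiable one_ne_zero y).hasDerivAt
  have hFd : ∀ y : ℝ, -a < y → y ≤ a →
      HasDerivAt F (-(k ^ 2) / (Real.sin (θ y)) ^ 2 * (u y) ^ 2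
        + ρ y * (2 * u y * deriv u y)) y := by
    intro y h1 h2
    have h3 : HasDerivAt (fun t => (u t) ^ 2) (2 * u y * deriv u y) y := by
      have := (hud y).pow 2
      simpa [mul_comm, mul_assoc, mul_left_comm] using! this
    exact (hρd y h1 h2).mul h3
  -- bound for |deriv u| on Icc (-a) a
  obtain ⟨M, hM⟩ := (isCompact_Icc (a := -a) (b := a)).exists_bound_of_continuousOn
    ((hu.continuous_deriv le_rfl).continuousOn)
  have hM0 : 0 ≤ M := le_trans (norm_nonneg _) (hM (-a) (by constructor <;> linarith))
  -- bound for |(deriv u)^2 - k^2 u^2| on Icc (-a) a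
  obtain ⟨M2, hM2⟩ := (isCompact_Icc (a := -a) (b := a)).exists_bound_of_continuousOn
    (f := fun y => (deriv u y) ^ 2 - k ^ 2 * (u y) ^ 2)
    (((hu.continuous_deriv le_rfl).pow 2).sub
      (continuous_const.mul ((hu.continuous 
      ).pow 2))).continuousOn
  have hM20 : 0 ≤ M2 := le_trans (norm_nonneg _) (hM2 (-a) (by constructor <;> linarith))
  -- main estimate for each ε ∈ (0, a]
  have key : ∀ ε : ℝ, 0 < ε → ε ≤ a →
      -(M2 + π * M ^ 2 / 2) * ε ≤ ∫ y in (-a)..a, ((deriv u y) ^ 2 - k ^ 2 * (u y) ^ 2) := by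
    intro ε hε hεa
    set h : ℝ → ℝ := fun y => (deriv u y) ^ 2 - k ^ 2 * (u y) ^ 2 with hh
    have hcont : Continuous h :=
      ((hu.continuous_deriv le_rfl).pow 2).sub (continuous_const.mul ((hu.continuous).pow 2))
    have hii : ∀ c d : ℝ, IntervalIntegrable h volume c d :=
      fun c d => hcont.intervalIntegrable c d
    have hεa2 : -a + ε ≤ a := by linarith
    have hsplit : (∫ y in (-a)..a, h y)
        = (∫ y in (-a)..(-a + ε), h y) + ∫ y in (-a + ε)..a, h y :=
      (intervalIntegral.integral_add_adjacent_intervals (hii _ _) (hii _ _)).symm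
    -- part 1
    have hb1 : |∫ y in (-a)..(-a + ε), h y| ≤ M2 * ε := by
      have hle : -a ≤ -a + ε := by linarith
      have := intervalIntegral.norm_integral_le_of_norm_le_const (C := M2)
        (f := h) (a := -a) (b := -a + ε) ?_
      · calc |∫ y in (-a)..(-a + ε), h y| = ‖∫ y in (-a)..(-a + ε), h y‖ := rfl
          _ ≤ M2 * |(-a + ε) - (-a)| := this
          _ = M2 * ε := by rw [show (-a + ε) - (-a) = ε by ring, abs_of_pos hε]
      · intro x hx
        rw [Set.uIoc_of_le hle] at hx
        exact hM2 x ⟨le_of_lt hx.1, by linarith [hx.2]⟩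
    -- continuity facts on [-a+ε, a]
    have hsub : Set.Icc (-a + ε) a ⊆ {y : ℝ | -a < y ∧ y ≤ a} := by
      intro x hx; exact ⟨by linarith [hx.1], hx.2⟩
    set G : ℝ → ℝ := fun y => -(k ^ 2) / (Real.sin (θ y)) ^ 2 * (u y) ^ 2
        + ρ y * (2 * u y * deriv u y) with hG
    have hcontθ : Continuous θ := by
      exact continuous_const.mul (continuous_id.add continuous_const)
    have hGcont : ContinuousOn G (Set.Icc (-a + ε) a) := by
      have hsne : ∀ x ∈ Set.Icc (-a + ε) a, Real.sin (θ x) ≠ 0 := by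
        intro x hx; exact (hsinpos x (hsub hx).1 (hsub hx).2).ne'
      apply ContinuousOn.add
      · exact (ContinuousOn.div continuousOn_const
          (((Real.continuous_sin.comp hcontθ).pow 2).continuousOn) fun x hx =>
            pow_ne_zero 2 (hsne x hx)).mul ((hu.continuous.pow 2).continuousOn)
      · exact ((continuousOn_const.mul ((Real.continuous_cos.comp hcontθ).continuousOn.div
          ((Real.continuous_sin.comp hcontθ).continuousOn) hsne))).mul
          (((continuous_const.mul hu.continuous).mul (hu.continuous_deriv le_rfl)).continuousOn)
    have hGii : IntervalIntegrable G volume (-a + ε) a := by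
      rw [intervalIntegrable_iff_integrableOn_Icc_of_le hεa2]
      exact hGcont.integrableOn_compact isCompact_Icc
    -- FTC
    have hFTC : (∫ y in (-a + ε)..a, G y) = F a - F (-a + ε) := by
      apply intervalIntegral.integral_eq_sub_of_hasDerivAt
      · intro x hx
        rw [Set.uIcc_of_le hεa2] at hx
        exact hFd x (hsub hx).1 (hsub hx).2
      · exact hGii
    -- pointwise identity on [-a+ε, a]
    have hpt : ∀ y ∈ Set.uIcc (-a + ε) a, h y - G y = (deriv u y - ρ y * u y) ^ 2 := by
      intro y hy
      rw [Set.uIcc_of_le hεa2] at hy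
      have h1 := (hsub hy).1
      have h2 := (hsub hy).2
      have hs := hsinpos y h1 h2
      have hcs := Real.sin_sq_add_cos_sq (θ y)
      have hsne : Real.sin (θ y) ≠ 0 := hs.ne'
      simp only [hh, hG, hρ]
      field_simp
      linear_combination (-(k ^ 2) * u y ^ 2) * hcs
    -- assemble part 2
    have hsq : (∫ y in (-a + ε)..a, (h y - G y))
        = ∫ y in (-a + ε)..a, (deriv u y - ρ y * u y) ^ 2 :=
      intervalIntegral.integral_congr hpt
    have hsqnn : 0 ≤ ∫ y in (-a + ε)..a, (deriv u y - ρ y * u y) ^ 2 :=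
      intervalIntegral.integral_nonneg hεa2 (fun x _ => sq_nonneg _)
    have hdiff : (∫ y in (-a + ε)..a, (h y - G y))
        = (∫ y in (-a + ε)..a, h y) - ∫ y in (-a + ε)..a, G y :=
      intervalIntegral.integral_sub (hii _ _) hGii
    -- F a = 0
    have hθa : θ a = π / 2 := by
      simp only [hθ, hk]; field_simp; ring
    have hFa : F a = 0 := by
      simp [hF, hρ, hθa]
    -- bound for F (-a + ε)
    have hθε : θ (-a + ε) = k * ε := by simp only [hθ]; ring_nf
    have hθεpos : 0 < k * ε := mul_pos hkpos hε
    have hθεle : k * ε ≤ π / 2 := by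
      have := (hθval (-a + ε) (by linarith) (by linarith)).2
      rwa [hθε] at this
    have hsinlb : 2 / π * (k * ε) ≤ Real.sin (k * ε) :=
      Real.mul_le_sin hθεpos.le hθεle
    have hsinpos' : 0 < Real.sin (k * ε) := by
      have := hsinpos (-a + ε) (by linarith) (by linarith)
      rwa [hθε] at this
    have hρbound : ρ (-a + ε) ≤ π / (2 * ε) := by
      simp only [hρ, hθε]
      have hcosle : Real.cos (k * ε) ≤ 1 := Real.cos_le_one _
      have h2π : (0:ℝ) < 2 / π * (k * ε) := by
        have := Real.pi_pos; positivity
      have hdd : Real.cos (k * ε) / Real.sin (k * ε) ≤ 1 / (2 / π * (k * ε)) :=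
        div_le_div₀ zero_le_one hcosle h2π hsinlb
      have := mul_le_mul_of_nonneg_left hdd hkpos.le
      apply this.trans_eq
      have hπ : (π:ℝ) ≠ 0 := Real.pi_ne_zero
      field_simp
    have hρnn : 0 ≤ ρ (-a + ε) := by
      simp only [hρ, hθε]
      have hcnn : 0 ≤ Real.cos (k * ε) :=
        Real.cos_nonneg_of_mem_Icc ⟨by linarith [Real.pi_pos], hθεle⟩
      exact mul_nonneg hkpos.le (div_nonneg hcnn hsinpos'.le)
    -- bound for u (-a+ε)
    have hub : (u (-a + ε)) ^ 2 ≤ (M * ε) ^ 2 := by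
      have hle : -a ≤ -a + ε := by linarith
      have hFTC2 : (∫ y in (-a)..(-a + ε), deriv u y) = u (-a + ε) - u (-a) := by
        apply intervalIntegral.integral_eq_sub_of_hasDerivAt (fun x _ => hud x)
        exact ((hu.continuous_deriv le_rfl)).intervalIntegrable _ _
      have hnb : ‖∫ y in (-a)..(-a + ε), deriv u y‖ ≤ M * |(-a + ε) - (-a)| := by
        apply intervalIntegral.norm_integral_le_of_norm_le_const
        intro x hx
        rw [Set.uIoc_of_le hle] at hx
        exact hM x ⟨le_of_lt hx.1, by linarith [hx.2]⟩
      rw [hFTC2, h0, sub_zero] at hnb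
      rw [show (-a + ε) - (-a) = ε by ring, abs_of_pos hε] at hnb
      have := abs_le.mp hnb
      nlinarith [this.1, this.2]
    have hFεb : F (-a + ε) ≤ π * M ^ 2 / 2 * ε := by
      have h1 : F (-a + ε) ≤ (π / (2 * ε)) * (M * ε) ^ 2 := by
        simp only [hF]
        exact mul_le_mul hρbound hub (sq_nonneg _) (by positivity)
      apply h1.trans_eq
      field_simp
    -- combine
    have hpart2 : -(π * M ^ 2 / 2) * ε ≤ ∫ y in (-a + ε)..a, h y := by
      have : (∫ y in (-a + ε)..a, h y) = (∫ y in (-a + ε)..a, (h y - G y)) + (F a - F (-a + ε)) := by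
        rw [hdiff, hFTC]; ring
      rw [this, hsq, hFa]
      linarith
    have hpart1 : -(M2 * ε) ≤ ∫ y in (-a)..(-a + ε), h y := by
      have := (abs_le.mp hb1).1
      linarith
    rw [hsplit]
    linarith
  -- conclude
  have hfin : 0 ≤ ∫ y in (-a)..a, ((deriv u y) ^ 2 - k ^ 2 * (u y) ^ 2) := by
    set X := ∫ y in (-a)..a, ((deriv u y) ^ 2 - k ^ 2 * (u y) ^ 2) with hX
    by_contra hneg
    push_neg at hneg
    have hc : 0 ≤ π * M ^ 2 / 2 := by positivity
    set K := M2 + π * M ^ 2 / 2 + 1 with hKdef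
    have hK : 0 < K := by rw [hKdef]; linarith
    have hεpos : 0 < min a (-X / (2 * K)) := by
      refine lt_min ha (div_pos (by linarith) (by linarith))
    have h1 := key (min a (-X / (2 * K))) hεpos (min_le_left _ _)
    have h2 : -(M2 + π * M ^ 2 / 2) * min a (-X / (2 * K)) ≥ -K * (-X / (2 * K)) := by
      have hmin : min a (-X / (2 * K)) ≤ -X / (2 * K) := min_le_right _ _
      nlinarith [hεpos.le, mul_nonneg hK.le (sub_nonneg.mpr hmin)]
    have : -K * (-X / (2 * K)) = X / 2 := by field_simp
    nlinarith
  have hint1 : IntervalIntegrable (fun y => (deriv u y) ^ 2) volume (-a) a :=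
    (((hu.continuous_deriv le_rfl).pow 2)).intervalIntegrable _ _
  have hint2 : IntervalIntegrable (fun y => k ^ 2 * (u y) ^ 2) volume (-a) a :=
    ((continuous_const.mul ((hu.continuous).pow 2))).intervalIntegrable _ _
  have := intervalIntegral.integral_sub hint1 hint2
  rw [this] at hfin
  rw [intervalIntegral.integral_const_mul] at hfin
  linarith

/-- Reflected version: Dirichlet condition at the right endpoint. -/
lemma mixed_poincare' (a : ℝ) (ha : 0 < a) (u : ℝ → ℝ) (hu : ContDiff ℝ 1 u)
    (h0 : u a = 0) :
    (π / (4 * a)) ^ 2 * ∫ y in (-a)..a, (u y) ^ 2 ≤ ∫ y in (-a)..a, (deriv u y) ^ 2 := by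
  set w : ℝ → ℝ := fun y => u (-y) with hw
  have hwc : ContDiff ℝ 1 w := hu.comp contDiff_neg
  have hw0 : w (-a) = 0 := by simp [hw, h0]
  have hwd : ∀ y, HasDerivAt w (-deriv u (-y)) y := by
    intro y
    have h1 : HasDerivAt u (deriv u (-y)) (-y) := ((hu.differentiable one_ne_zero) (-y)).hasDerivAt
    have h2 : HasDerivAt (fun y : ℝ => -y) (-1) y := hasDerivAt_neg y
    simpa using! h1.comp y h2
  have key := mixed_poincare a ha w hwc hw0
  have e1 : (∫ y in (-a)..a, (w y) ^ 2) = ∫ y in (-a)..a, (u y) ^ 2 := by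
    have := intervalIntegral.integral_comp_neg (a := -a) (b := a) (fun x => (u x) ^ 2)
    simpa [hw] using this
  have e2 : (∫ y in (-a)..a, (deriv w y) ^ 2) = ∫ y in (-a)..a, (deriv u y) ^ 2 := by
    have hdw : ∀ y, (deriv w y) ^ 2 = ((fun x => (deriv u x) ^ 2) (-y)) := by
      intro y; rw [(hwd y).deriv]; simp [neg_sq]
    rw [intervalIntegral.integral_congr (g := fun y => (fun x => (deriv u x) ^ 2) (-y))
      (fun y _ => hdw y)]
    have := intervalIntegral.integral_comp_neg (a := -a) (b := a) (fun x => (deriv u x) ^ 2)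
    simpa using this
  rw [e1, e2] at key
  exact key

/-- Gaussian (harmonic-oscillator) identity on the line. -/
lemma gaussian_identity (φ : ℝ → ℝ) (hφ : ContDiff ℝ 1 φ)
    (h2 : Integrable (fun y => (φ y) ^ 2))
    (hd : Integrable (fun y => (deriv φ y) ^ 2))
    (hy : Integrable (fun y => (y * φ y) ^ 2)) :
    (∫ y, (deriv φ y) ^ 2) + (1 / 16) * (∫ y, (y * φ y) ^ 2) - (1 / 4) * (∫ y, (φ y) ^ 2)
      = ∫ y, (deriv φ y + y * φ y / 4) ^ 2 := by
  have hφd : ∀ y : ℝ, HasDerivAt φ (deriv φ y) y :=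
    fun y => ((hφ.differentiable one_ne_zero) y).hasDerivAt
  have hcd : Continuous (deriv φ) := hφ.continuous_deriv le_rfl
  set Q : ℝ → ℝ := fun y => (deriv φ y + y * φ y / 4) ^ 2 with hQ
  have hQc : Continuous Q := by
    apply Continuous.pow
    exact hcd.add ((continuous_id.mul hφ.continuous).div_const 4)
  have hQint : Integrable Q := by
    apply Integrable.mono' ((hd.const_mul 2).add (hy.const_mul (1/8)))
      hQc.aestronglyMeasurable
    filter_upwards with y
    simp only [Pi.add_apply, hQ]
    rw [Real.norm_eq_abs, abs_of_nonneg (sq_nonneg _)]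
    nlinarith [sq_nonneg (deriv φ y - y * φ y / 4)]
  set h : ℝ → ℝ := fun y => (deriv φ y) ^ 2 + (1/16) * (y * φ y) ^ 2 - (1/4) * (φ y) ^ 2
    with hh
  have hhc : Continuous h := by
    exact ((hcd.pow 2).add (continuous_const.mul ((continuous_id.mul hφ.continuous).pow 2))).sub
      (continuous_const.mul (hφ.continuous.pow 2))
  have hhint : Integrable h := ((hd.add (hy.const_mul (1/16))).sub (h2.const_mul (1/4)))
  -- FTC identity on [-R, R]
  have hGd : ∀ y : ℝ, HasDerivAt (fun t => t * (φ t) ^ 2 / 4)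
      ((φ y) ^ 2 / 4 + y * (2 * φ y * deriv φ y) / 4) y := by
    intro y
    have hsq : HasDerivAt (fun t => (φ t) ^ 2) (2 * φ y * deriv φ y) y := by
      have := (hφd y).pow 2
      simpa [mul_comm, mul_assoc, mul_left_comm] using! this
    have := ((hasDerivAt_id y).mul hsq).div_const 4
    convert! this using 1
    simp only [id_eq]
    ring
  have hRident : ∀ R : ℝ, (∫ y in (-R)..R, Q y)
      = (∫ y in (-R)..R, h y) + (R * (φ R) ^ 2 / 4 - (-R) * (φ (-R)) ^ 2 / 4) := by
    intro R
    have hFTC : (∫ y in (-R)..R, ((φ y) ^ 2 / 4 + y * (2 * φ y * deriv φ y) / 4))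
        = R * (φ R) ^ 2 / 4 - (-R) * (φ (-R)) ^ 2 / 4 := by
      apply intervalIntegral.integral_eq_sub_of_hasDerivAt (fun x _ => hGd x)
      apply Continuous.intervalIntegrable
      exact ((hφ.continuous.pow 2).div_const 4).add
        ((continuous_id'.mul ((continuous_const.mul hφ.continuous).mul hcd)).div_const 4)
    have hpt : ∀ y : ℝ, Q y = h y + ((φ y) ^ 2 / 4 + y * (2 * φ y * deriv φ y) / 4) := by
      intro y; simp only [hQ, hh]; ring
    rw [intervalIntegral.integral_congr (g := fun y =>
        h y + ((φ y) ^ 2 / 4 + y * (2 * φ y * deriv φ y) / 4)) (fun y _ => hpt y)]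
    rw [intervalIntegral.integral_add (g := fun y => (φ y) ^ 2 / 4 + y * (2 * φ y * deriv φ y) / 4) (hhc.intervalIntegrable _ _)
      (Continuous.intervalIntegrable (((hφ.continuous.pow 2).div_const 4).add
        ((continuous_id'.mul ((continuous_const.mul hφ.continuous).mul hcd)).div_const 4)) _ _),
      hFTC]
  -- limits
  have htendQ : Filter.Tendsto (fun R : ℝ => ∫ y in (-R)..R, Q y) Filter.atTop
      (nhds (∫ y, Q y)) :=
    intervalIntegral_tendsto_integral hQint Filter.tendsto_neg_atTop_atBot Filter.tendsto_id
  have htendh : Filter.Tendsto (fun R : ℝ => ∫ y in (-R)..R, h y) Filter.atTop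
      (nhds (∫ y, h y)) :=
    intervalIntegral_tendsto_integral hhint Filter.tendsto_neg_atTop_atBot Filter.tendsto_id
  set L : ℝ := (∫ y, Q y) - ∫ y, h y with hL
  have htendB : Filter.Tendsto (fun R : ℝ => R * ((φ R) ^ 2 + (φ (-R)) ^ 2) / 4)
      Filter.atTop (nhds L) := by
    have : (fun R : ℝ => R * ((φ R) ^ 2 + (φ (-R)) ^ 2) / 4)
        = fun R => (∫ y in (-R)..R, Q y) - ∫ y in (-R)..R, h y := by
      funext R
      rw [hRident R]
      ring
    rw [this]
    exact htendQ.sub htendh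
  have hLnn : 0 ≤ L := by
    apply le_of_tendsto_of_tendsto tendsto_const_nhds htendB
    filter_upwards [Filter.eventually_ge_atTop (0:ℝ)] with R hR
    have : 0 ≤ R * ((φ R) ^ 2 + (φ (-R)) ^ 2) := by positivity
    linarith
  have hLzero : L = 0 := by
    by_contra hne
    have hLpos : 0 < L := lt_of_le_of_ne hLnn (Ne.symm hne)
    -- eventually ψ R ≥ 2L/R
    have hev : ∀ᶠ R : ℝ in Filter.atTop, L / 2 ≤ R * ((φ R) ^ 2 + (φ (-R)) ^ 2) / 4 := by
      exact htendB.eventually (eventually_ge_nhds (by linarith))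
    obtain ⟨R₀, hR₀⟩ := hev.exists_forall_of_atTop
    set R₁ : ℝ := max R₀ 1 with hR₁
    have hR₁pos : (0:ℝ) < R₁ := lt_of_lt_of_le one_pos (le_max_right _ _)
    -- ψ is integrable on Ioi R₁
    have hψint : IntegrableOn (fun R : ℝ => (φ R) ^ 2 + (φ (-R)) ^ 2) (Set.Ioi R₁) := by
      apply Integrable.integrableOn
      exact h2.add (h2.comp_neg)
    -- but ψ ≥ 2L/R there
    have hmono : IntegrableOn (fun R : ℝ => 2 * L / R) (Set.Ioi R₁) := by
      apply Integrable.mono' hψint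
      · apply ContinuousOn.aestronglyMeasurable
        · apply ContinuousOn.div continuousOn_const continuousOn_id
          intro x hx
          simp only [id_eq]
          exact (lt_trans hR₁pos hx).ne'
        · exact measurableSet_Ioi
      · rw [ae_restrict_iff' measurableSet_Ioi]
        filter_upwards with R hR
        have hRpos : 0 < R := lt_trans hR₁pos hR
        have h4 := hR₀ R (le_trans (le_max_left _ _) (le_of_lt hR))
        rw [Real.norm_eq_abs, abs_of_nonneg (by positivity)]
        rw [div_le_iff₀ hRpos]
        nlinarith
    -- contradiction with non-integrability of 1/x
    have : IntegrableOn (fun x : ℝ => x ^ (-1 : ℝ)) (Set.Ioi R₁) := by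
      have heq : Set.EqOn (fun x : ℝ => x ^ (-1 : ℝ))
          (fun x : ℝ => (2 * L)⁻¹ * (2 * L / x)) (Set.Ioi R₁) := by
        intro x hx
        have hxpos : 0 < x := lt_trans hR₁pos hx
        show x ^ (-1 : ℝ) = (2 * L)⁻¹ * (2 * L / x)
        rw [Real.rpow_neg_one]
        field_simp
      exact (IntegrableOn.congr_fun (hmono.const_mul (2 * L)⁻¹) heq.symm measurableSet_Ioi)
    rw [integrableOn_Ioi_rpow_iff hR₁pos] at this
    linarith
  have : (∫ y, Q y) = ∫ y, h y := by
    have := hLzero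
    rw [hL] at this
    linarith
  rw [this]
  simp only [hh]
  have e1 := MeasureTheory.integral_sub (hd.add (hy.const_mul (1/16))) (h2.const_mul (1/4))
  simp only [Pi.add_apply] at e1
  have e2 := MeasureTheory.integral_add hd (hy.const_mul (1/16))
  try simp only [Pi.add_apply] at e2
  rw [e1, e2, MeasureTheory.integral_const_mul, MeasureTheory.integral_const_mul]

lemma cs_interval (c d : ℝ) (hcd : c ≤ d) (f : ℝ → ℝ) (hf : Continuous f) :
    (∫ y in c..d, f y) ^ 2 ≤ (d - c) * ∫ y in c..d, (f y) ^ 2 := by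
  rcases eq_or_lt_of_le hcd with h | h
  · subst h; simp
  · set L : ℝ := d - c with hL
    have hLpos : 0 < L := by simp [hL]; linarith
    set I : ℝ := ∫ y in c..d, f y with hI
    have h0 : 0 ≤ ∫ y in c..d, (f y - I / L) ^ 2 :=
      intervalIntegral.integral_nonneg hcd fun _ _ => sq_nonneg _
    have hexp : (∫ y in c..d, (f y - I / L) ^ 2)
        = (∫ y in c..d, (f y) ^ 2) - 2 * (I / L) * I + (I / L) ^ 2 * L := by
      have hpt : ∀ y, (f y - I / L) ^ 2
          = (f y) ^ 2 - (2 * (I / L)) * f y + (I / L) ^ 2 := by intro y; ring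
      rw [intervalIntegral.integral_congr (g := fun y =>
        (f y) ^ 2 - (2 * (I / L)) * f y + (I / L) ^ 2) (fun y _ => hpt y)]
      rw [intervalIntegral.integral_add (f := fun y => (f y) ^ 2 - (2 * (I / L)) * f y) (g := fun _ => (I / L) ^ 2)
        (((hf.pow 2).sub (continuous_const.mul hf)).intervalIntegrable _ _)
        (continuous_const.intervalIntegrable _ _),
        intervalIntegral.integral_sub (f := fun y => (f y) ^ 2) (g := fun y => (2 * (I / L)) * f y) ((hf.pow 2).intervalIntegrable _ _)
        ((continuous_const.mul hf).intervalIntegrable _ _),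
        intervalIntegral.integral_const_mul, intervalIntegral.integral_const]
      rw [← hI, ← hL]
      ring_nf
    rw [hexp] at h0
    have hIL : (I / L) ^ 2 * L = I ^ 2 / L := by field_simp
    have h2 : 2 * (I / L) * I = 2 * I ^ 2 / L := by field_simp
    rw [hIL, h2] at h0
    have h3 : 2 * I ^ 2 / L = 2 * (I ^ 2 / L) := by ring
    rw [h3] at h0
    have : I ^ 2 / L ≤ ∫ y in c..d, (f y) ^ 2 := by linarith
    calc I ^ 2 = (I ^ 2 / L) * L := by field_simp
      _ ≤ (∫ y in c..d, (f y) ^ 2) * L := mul_le_mul_of_nonneg_right this hLpos.le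
      _ = L * ∫ y in c..d, (f y) ^ 2 := by ring
      _ = (d - c) * ∫ y in c..d, (f y) ^ 2 := by rw [hL]

lemma dirichlet_cheap (a : ℝ) (ha : 0 < a) (g : ℝ → ℝ) (hg : ContDiff ℝ 1 g)
    (hga : g (-a) = 0) (hgb : g a = 0) :
    (∫ y in (-a)..a, (g y) ^ 2) ≤ a ^ 2 / 2 * ∫ y in (-a)..a, (deriv g y) ^ 2 := by
  have hgc : Continuous g := hg.continuous
  have hdc : Continuous (deriv g) := hg.continuous_deriv le_rfl
  have hgd : ∀ y : ℝ, HasDerivAt g (deriv g y) y :=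
    fun y => ((hg.differentiable one_ne_zero) y).hasDerivAt
  have hFTC : ∀ c d : ℝ, (∫ y in c..d, deriv g y) = g d - g c := fun c d =>
    intervalIntegral.integral_eq_sub_of_hasDerivAt (fun x _ => hgd x)
      (hdc.intervalIntegrable _ _)
  have hd2nn : ∀ c d : ℝ, c ≤ d → (0:ℝ) ≤ ∫ y in c..d, (deriv g y) ^ 2 :=
    fun c d h => intervalIntegral.integral_nonneg h fun _ _ => sq_nonneg _
  set A1 : ℝ := ∫ y in (-a)..0, (deriv g y) ^ 2 with hA1
  set A2 : ℝ := ∫ y in (0:ℝ)..a, (deriv g y) ^ 2 with hA2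
  have hmono : ∀ c d c' d' : ℝ, c' ≤ c → c ≤ d → d ≤ d' →
      (∫ y in c..d, (deriv g y) ^ 2) ≤ ∫ y in c'..d', (deriv g y) ^ 2 := by
    intro c d c' d' h1 h2 h3
    apply intervalIntegral.integral_mono_interval h1 h2 h3
    · filter_upwards with y using sq_nonneg _
    · exact (hdc.pow 2).intervalIntegrable _ _
  -- left half
  have hleft : ∀ y ∈ Set.Icc (-a) 0, (g y) ^ 2 ≤ (y + a) * A1 := by
    intro y hy
    have h1 : g y = ∫ t in (-a)..y, deriv g t := by rw [hFTC, hga, sub_zero]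
    have h2 : (g y) ^ 2 ≤ (y - (-a)) * ∫ t in (-a)..y, (deriv g t) ^ 2 := by
      rw [h1]; exact cs_interval (-a) y hy.1 _ hdc
    calc (g y) ^ 2 ≤ (y - (-a)) * ∫ t in (-a)..y, (deriv g t) ^ 2 := h2
      _ ≤ (y + a) * A1 := by
          rw [show y - (-a) = y + a by ring]
          apply mul_le_mul_of_nonneg_left _ (by linarith [hy.1])
          exact hmono (-a) y (-a) 0 le_rfl hy.1 hy.2
  have hright : ∀ y ∈ Set.Icc (0:ℝ) a, (g y) ^ 2 ≤ (a - y) * A2 := by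
    intro y hy
    have h1 : g y = -∫ t in y..a, deriv g t := by rw [hFTC, hgb]; ring
    have h2 : (g y) ^ 2 ≤ (a - y) * ∫ t in y..a, (deriv g t) ^ 2 := by
      rw [h1, neg_sq]; exact cs_interval y a hy.2 _ hdc
    calc (g y) ^ 2 ≤ (a - y) * ∫ t in y..a, (deriv g t) ^ 2 := h2
      _ ≤ (a - y) * A2 := by
          apply mul_le_mul_of_nonneg_left _ (by linarith [hy.2])
          exact hmono y a 0 a hy.1 hy.2 le_rfl
  -- integrate
  have hileft : (∫ y in (-a)..0, (g y) ^ 2) ≤ a ^ 2 / 2 * A1 := by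
    have hint : (∫ y in (-a)..0, ((y + a) * A1)) = a ^ 2 / 2 * A1 := by
      rw [intervalIntegral.integral_mul_const]
      have : (∫ y in (-a)..(0:ℝ), (y + a)) = a ^ 2 / 2 := by
        rw [intervalIntegral.integral_add (intervalIntegrable_id)
          (intervalIntegrable_const), integral_id, intervalIntegral.integral_const]
        simp
        ring
      rw [this]
    rw [← hint]
    apply intervalIntegral.integral_mono_on (by linarith)
      ((hgc.pow 2).intervalIntegrable _ _)
      (((continuous_id.add continuous_const).mul continuous_const).intervalIntegrable _ _)
    exact hleft
  have hiright : (∫ y in (0:ℝ)..a, (g y) ^ 2) ≤ a ^ 2 / 2 * A2 := by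
    have hint : (∫ y in (0:ℝ)..a, ((a - y) * A2)) = a ^ 2 / 2 * A2 := by
      rw [intervalIntegral.integral_mul_const]
      have : (∫ y in (0:ℝ)..a, (a - y)) = a ^ 2 / 2 := by
        rw [intervalIntegral.integral_sub (intervalIntegrable_const)
          (intervalIntegrable_id), integral_id, intervalIntegral.integral_const]
        simp
        ring
      rw [this]
    rw [← hint]
    apply intervalIntegral.integral_mono_on ha.le
      ((hgc.pow 2).intervalIntegrable _ _)
      (((continuous_const.sub continuous_id).mul continuous_const).intervalIntegrable _ _)
    exact hright
  have hsplit : (∫ y in (-a)..a, (g y) ^ 2)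
      = (∫ y in (-a)..0, (g y) ^ 2) + ∫ y in (0:ℝ)..a, (g y) ^ 2 :=
    (intervalIntegral.integral_add_adjacent_intervals
      ((hgc.pow 2).intervalIntegrable _ _) ((hgc.pow 2).intervalIntegrable _ _)).symm
  have hsplit2 : (∫ y in (-a)..a, (deriv g y) ^ 2) = A1 + A2 :=
    (intervalIntegral.integral_add_adjacent_intervals
      ((hdc.pow 2).intervalIntegrable _ _) ((hdc.pow 2).intervalIntegrable _ _)).symm
  rw [hsplit, hsplit2]
  linarith

lemma ae_zero_open {f : ℝ × ℝ → ℝ} (hf : Continuous f) {U : Set (ℝ × ℝ)} (hU : IsOpen U)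
    (h : f =ᵐ[volume.restrict U] 0) : ∀ p ∈ U, f p = 0 := by
  by_contra hc
  push_neg at hc
  obtain ⟨p, hpU, hp⟩ := hc
  set V := U ∩ {q | f q ≠ 0} with hV
  have hVopen : IsOpen V := hU.inter (isOpen_ne_fun hf continuous_const)
  have hVne : V.Nonempty := ⟨p, hpU, hp⟩
  have hpos : 0 < volume.restrict U V := by
    rw [Measure.restrict_apply hVopen.measurableSet]
    rw [Set.inter_eq_self_of_subset_left (by rw [hV]; exact Set.inter_subset_left)]
    exact hVopen.measure_pos volume hVne
  have hz : volume.restrict U {q | f q ≠ 0} = 0 := by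
    have := ae_iff.mp h
    simpa using this
  have : volume.restrict U V ≤ volume.restrict U {q | f q ≠ 0} :=
    measure_mono (by rw [hV]; exact Set.inter_subset_right)
  rw [hz] at this
  exact absurd (le_antisymm this zero_le) (ne_of_gt hpos)

lemma cont_sq_zero (a : ℝ) (ha : 0 < a) (g : ℝ → ℝ) (hg : Continuous g)
    (h : (∫ y in (-a)..a, (g y) ^ 2) = 0) : ∀ y ∈ Set.Ioo (-a) a, g y = 0 := by
  by_contra hc
  push_neg at hc
  obtain ⟨y0, hy0, hgy0⟩ := hc
  have hcont : ContinuousAt g y0 := hg.continuousAt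
  obtain ⟨δ, hδ, hball⟩ := Metric.eventually_nhds_iff.mp (hcont.eventually_ne hgy0)
  set δ' : ℝ := min δ (min (y0 + a) (a - y0)) with hδ'
  have hδ'pos : 0 < δ' := by
    apply lt_min hδ
    exact lt_min (by linarith [hy0.1]) (by linarith [hy0.2])
  set c : ℝ := y0 - δ' / 2 with hcdef
  set d : ℝ := y0 + δ' / 2 with hddef
  have hcd : c < d := by rw [hcdef, hddef]; linarith
  have hca : -a ≤ c := by
    have : δ' ≤ y0 + a := le_trans (min_le_right _ _) (min_le_left _ _)
    rw [hcdef]; linarith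
  have hda : d ≤ a := by
    have : δ' ≤ a - y0 := le_trans (min_le_right _ _) (min_le_right _ _)
    rw [hddef]; linarith
  have hpos : 0 < ∫ y in c..d, (g y) ^ 2 := by
    apply intervalIntegral.intervalIntegral_pos_of_pos_on
      ((hg.pow 2).intervalIntegrable _ _)
    · intro x hx
      have hxδ : dist x y0 < δ := by
        rw [Real.dist_eq, abs_lt]
        have h1 : δ' ≤ δ := min_le_left _ _
        constructor
        · have := hx.1; rw [hcdef] at this; linarith
        · have := hx.2; rw [hddef] at this; linarith
      have := hball hxδ
      exact sq_pos_of_ne_zero this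
    · exact hcd
  have hmono : (∫ y in c..d, (g y) ^ 2) ≤ ∫ y in (-a)..a, (g y) ^ 2 := by
    apply intervalIntegral.integral_mono_interval hca hcd.le hda
    · filter_upwards with y using sq_nonneg _
    · exact (hg.pow 2).intervalIntegrable _ _
  rw [h] at hmono
  linarith

end aux

/-- For every `s ≥ 0`, the lowest eigenvalue `μ_π(s)` of the twisted operator `T̂_πˢ`
is strictly greater than `1/4`: on the twisted form domain one has
`Ĵ_πˢ[v] ≥ (1/4)‖v‖²`, and if `Ĵ_πˢ[v] = (1/4)‖v‖²` then `v = 0`. -/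
theorem twisted_lowest_eigenvalue_strict (a : ℝ) (ha : 0 < a) :
    ∀ s : ℝ, 0 ≤ s →
      ∀ v : ℝ × ℝ → ℝ, ContDiff ℝ 1 v →
        IntegrableOn (fun p => (v p) ^ 2) (strip a) →
        IntegrableOn (fun p => (pd1 v p) ^ 2) (strip a) →
        IntegrableOn (fun p => (pd2 v p) ^ 2) (strip a) →
        IntegrableOn (fun p : ℝ × ℝ => (p.1 * v p) ^ 2) (strip a) →
        (∀ y1 : ℝ, y1 < 0 → v (y1, -a) = 0) →
        (∀ y1 : ℝ, 0 < y1 → v (y1, a) = 0) →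
        (1 / 4) * (∫ p in strip a, (v p) ^ 2) ≤ Jhat a s v ∧
        (Jhat a s v = (1 / 4) * (∫ p in strip a, (v p) ^ 2) →
          ∀ p ∈ strip a, v p = 0) := by
  intro s hs v hv hIv hI1 hI2 hIy hbc1 hbc2
  set E1 : ℝ := (π / (4 * a)) ^ 2 with hE1
  set ν : Measure ℝ := volume.restrict (Set.Ioo (-a) a) with hν
  have hres : (volume : Measure (ℝ × ℝ)).restrict (strip a) = (volume : Measure ℝ).prod ν := by
    rw [strip, MeasureTheory.Measure.volume_eq_prod, hν, ← Measure.prod_restrict, Measure.restrict_univ]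
  -- integrability over the product measure
  have hIv' : Integrable (fun p : ℝ × ℝ => (v p) ^ 2) ((volume : Measure ℝ).prod ν) := by
    rw [← hres]; exact hIv
  have hI1' : Integrable (fun p : ℝ × ℝ => (pd1 v p) ^ 2) ((volume : Measure ℝ).prod ν) := by
    rw [← hres]; exact hI1
  have hI2' : Integrable (fun p : ℝ × ℝ => (pd2 v p) ^ 2) ((volume : Measure ℝ).prod ν) := by
    rw [← hres]; exact hI2
  have hIy' : Integrable (fun p : ℝ × ℝ => (p.1 * v p) ^ 2) ((volume : Measure ℝ).prod ν) := by
    rw [← hres]; exact hIy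
  have hint_eq : ∀ f : ℝ × ℝ → ℝ,
      (∫ p in strip a, f p) = ∫ p, f p ∂((volume : Measure ℝ).prod ν) := by
    intro f
    show (∫ p, f p ∂((volume : Measure (ℝ × ℝ)).restrict (strip a))) = _
    rw [hres]
  -- conversion between ν-integrals and interval integrals
  have conv : ∀ f : ℝ → ℝ, (∫ y, f y ∂ν) = ∫ y in (-a)..a, f y := by
    intro f
    rw [intervalIntegral.integral_of_le (by linarith : -a ≤ a),
      MeasureTheory.integral_Ioc_eq_integral_Ioo]
  -- part 2: transverse inequality, slice by slice
  have slice2 : ∀ y1 : ℝ, y1 ≠ 0 →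
      E1 * (∫ y2, (v (y1, y2)) ^ 2 ∂ν) ≤ ∫ y2, (pd2 v (y1, y2)) ^ 2 ∂ν := by
    intro y1 hy1
    have hsl : ContDiff ℝ 1 (fun t => v (y1, t)) := hv.comp (contDiff_const.prodMk contDiff_id)
    have hder : (fun t => (deriv (fun t' => v (y1, t')) t) ^ 2)
        = fun t => (pd2 v (y1, t)) ^ 2 := rfl
    rw [conv, conv]
    rcases lt_or_gt_of_ne hy1 with h | h
    · have := mixed_poincare a ha (fun t => v (y1, t)) hsl (hbc1 y1 h)
      rw [hE1]
      calc (π / (4 * a)) ^ 2 * ∫ y2 in (-a)..a, (v (y1, y2)) ^ 2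
          ≤ ∫ y in (-a)..a, (deriv (fun t => v (y1, t)) y) ^ 2 := this
        _ = ∫ y2 in (-a)..a, (pd2 v (y1, y2)) ^ 2 := by rfl
    · have := mixed_poincare' a ha (fun t => v (y1, t)) hsl (hbc2 y1 h)
      rw [hE1]
      calc (π / (4 * a)) ^ 2 * ∫ y2 in (-a)..a, (v (y1, y2)) ^ 2
          ≤ ∫ y in (-a)..a, (deriv (fun t => v (y1, t)) y) ^ 2 := this
        _ = ∫ y2 in (-a)..a, (pd2 v (y1, y2)) ^ 2 := by rfl
  have hbr2 : E1 * (∫ p, (v p) ^ 2 ∂((volume : Measure ℝ).prod ν))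
      ≤ ∫ p, (pd2 v p) ^ 2 ∂((volume : Measure ℝ).prod ν) := by
    rw [MeasureTheory.integral_prod _ hIv', MeasureTheory.integral_prod _ hI2',
      ← MeasureTheory.integral_const_mul]
    apply MeasureTheory.integral_mono_ae
    · exact (hIv'.integral_prod_left).const_mul E1
    · exact hI2'.integral_prod_left
    · have hne : ∀ᵐ (y1 : ℝ) ∂(volume : Measure ℝ), y1 ≠ 0 := by
        rw [ae_iff]
        have : {y1 : ℝ | ¬ y1 ≠ 0} = {0} := by ext x; simp
        rw [this]
        exact Real.volume_singleton
      filter_upwards [hne] with y1 hy1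
      exact slice2 y1 hy1
  -- part 1: Gaussian identity, slice by slice
  set Q : ℝ × ℝ → ℝ := fun p => (pd1 v p + p.1 * v p / 4) ^ 2 with hQdef
  have hQc : Continuous Q := by
    apply Continuous.pow
    exact (continuous_pd1 hv).add
      ((continuous_fst.mul (hv.continuous.comp continuous_id)).div_const 4)
  have hQint : Integrable Q ((volume : Measure ℝ).prod ν) := by
    apply Integrable.mono' ((hI1'.const_mul 2).add (hIy'.const_mul (1/8)))
      hQc.aestronglyMeasurable
    filter_upwards with p
    simp only [Pi.add_apply, hQdef]
    rw [Real.norm_eq_abs, abs_of_nonneg (sq_nonneg _)]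
    nlinarith [sq_nonneg (pd1 v p - p.1 * v p / 4)]
  have hae1 : ∀ᵐ y2 ∂ν, (∫ y1, Q (y1, y2))
      = (∫ y1, (pd1 v (y1, y2)) ^ 2) + (1/16) * (∫ y1, (y1 * v (y1, y2)) ^ 2)
        - (1/4) * ∫ y1, (v (y1, y2)) ^ 2 := by
    filter_upwards [hI1'.prod_left_ae, hIv'.prod_left_ae, hIy'.prod_left_ae]
      with y2 h1 h2 h3
    have hsl : ContDiff ℝ 1 (fun t => v (t, y2)) := hv.comp (contDiff_id.prodMk contDiff_const)
    have := gaussian_identity (fun t => v (t, y2)) hsl h2 h1 h3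
    exact this.symm
  have key1 : (∫ p, (pd1 v p) ^ 2 ∂((volume : Measure ℝ).prod ν))
      + (1/16) * (∫ p, (p.1 * v p) ^ 2 ∂((volume : Measure ℝ).prod ν))
      - (1/4) * (∫ p, (v p) ^ 2 ∂((volume : Measure ℝ).prod ν))
      = ∫ p, Q p ∂((volume : Measure ℝ).prod ν) := by
    rw [MeasureTheory.integral_prod_symm _ hQint]
    rw [MeasureTheory.integral_congr_ae hae1]
    have i1 : Integrable (fun y2 => ∫ y1, (pd1 v (y1, y2)) ^ 2) ν := hI1'.integral_prod_right
    have i2 : Integrable (fun y2 => (1/16) * ∫ y1, (y1 * v (y1, y2)) ^ 2) ν :=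
      (hIy'.integral_prod_right).const_mul _
    have i3 : Integrable (fun y2 => (1/4) * ∫ y1, (v (y1, y2)) ^ 2) ν :=
      (hIv'.integral_prod_right).const_mul _
    have e1 := MeasureTheory.integral_sub (i1.add i2) i3
    simp only [Pi.add_apply] at e1
    have e2 := MeasureTheory.integral_add i1 i2
    try simp only [Pi.add_apply] at e2
    rw [e1, e2, MeasureTheory.integral_const_mul, MeasureTheory.integral_const_mul]
    rw [MeasureTheory.integral_prod_symm _ hI1', MeasureTheory.integral_prod_symm _ hIy',
      MeasureTheory.integral_prod_symm _ hIv']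
  have hQnn : 0 ≤ ∫ p, Q p ∂((volume : Measure ℝ).prod ν) :=
    MeasureTheory.integral_nonneg fun p => sq_nonneg _
  -- the inequality
  have hexp := Real.exp_pos s
  have hmain : (1 / 4) * (∫ p in strip a, (v p) ^ 2) ≤ Jhat a s v := by
    rw [Jhat, hint_eq (fun p => (v p) ^ 2), hint_eq (fun p => (pd1 v p) ^ 2),
      hint_eq (fun p => (pd2 v p) ^ 2), hint_eq (fun p => (p.1 * v p) ^ 2)]
    have h2 : 0 ≤ Real.exp s * ((∫ p, (pd2 v p) ^ 2 ∂((volume : Measure ℝ).prod ν))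
        - E1 * ∫ p, (v p) ^ 2 ∂((volume : Measure ℝ).prod ν)) :=
      mul_nonneg hexp.le (sub_nonneg.mpr hbr2)
    rw [← hE1]
    nlinarith [hQnn, h2, key1]
  refine ⟨hmain, ?_⟩
  -- equality case
  intro hJ
  have heq : (∫ p, Q p ∂((volume : Measure ℝ).prod ν))
      + Real.exp s * ((∫ p, (pd2 v p) ^ 2 ∂((volume : Measure ℝ).prod ν))
        - E1 * ∫ p, (v p) ^ 2 ∂((volume : Measure ℝ).prod ν)) = 0 := by
    rw [Jhat, hint_eq (fun p => (v p) ^ 2), hint_eq (fun p => (pd1 v p) ^ 2),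
      hint_eq (fun p => (pd2 v p) ^ 2), hint_eq (fun p => (p.1 * v p) ^ 2)] at hJ
    rw [← hE1] at hJ
    nlinarith [hJ, key1]
  have h2nn : 0 ≤ Real.exp s * ((∫ p, (pd2 v p) ^ 2 ∂((volume : Measure ℝ).prod ν))
      - E1 * ∫ p, (v p) ^ 2 ∂((volume : Measure ℝ).prod ν)) :=
    mul_nonneg hexp.le (sub_nonneg.mpr hbr2)
  have hQzero : (∫ p, Q p ∂((volume : Measure ℝ).prod ν)) = 0 := by linarith
  have hbr2zero : (∫ p, (pd2 v p) ^ 2 ∂((volume : Measure ℝ).prod ν))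
      = E1 * ∫ p, (v p) ^ 2 ∂((volume : Measure ℝ).prod ν) := by
    have : Real.exp s * ((∫ p, (pd2 v p) ^ 2 ∂((volume : Measure ℝ).prod ν))
        - E1 * ∫ p, (v p) ^ 2 ∂((volume : Measure ℝ).prod ν)) = 0 := by linarith
    have h3 := (mul_eq_zero.mp this).resolve_left hexp.ne'
    linarith
  -- Q vanishes identically on the strip
  have hQae : Q =ᵐ[volume.restrict (strip a)] 0 := by
    rw [hres]
    exact (MeasureTheory.integral_eq_zero_iff_of_nonneg_ae
      (Filter.Eventually.of_forall fun p => sq_nonneg _) hQint).mp hQzero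
  have hstrip_open : IsOpen (strip a) := IsOpen.prod isOpen_univ isOpen_Ioo
  have hQ0 : ∀ p ∈ strip a, Q p = 0 := ae_zero_open hQc hstrip_open hQae
  have hODE : ∀ y1 y2 : ℝ, y2 ∈ Set.Ioo (-a) a →
      pd1 v (y1, y2) + y1 * v (y1, y2) / 4 = 0 := by
    intro y1 y2 hy2
    have hmem : (y1, y2) ∈ strip a := ⟨Set.mem_univ _, hy2⟩
    have := hQ0 _ hmem
    rw [hQdef] at this
    exact (pow_eq_zero_iff two_ne_zero).mp this
  -- solve the ODE: v (y1, y2) = v (0, y2) * exp (-(y1^2)/8)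
  set g : ℝ → ℝ := fun t => v (0, t) with hgdef
  have hgc1 : ContDiff ℝ 1 g := hv.comp (contDiff_const.prodMk contDiff_id)
  have hprod : ∀ y1 y2 : ℝ, y2 ∈ Set.Ioo (-a) a →
      v (y1, y2) = g y2 * Real.exp (-(y1 ^ 2) / 8) := by
    intro y1 y2 hy2
    set F : ℝ → ℝ := fun t => v (t, y2) * Real.exp (t ^ 2 / 8) with hF
    have hFd : ∀ t : ℝ, HasDerivAt F
        ((pd1 v (t, y2) + t * v (t, y2) / 4) * Real.exp (t ^ 2 / 8)) t := by
      intro t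
      have h1 : HasDerivAt (fun t' => v (t', y2)) (pd1 v (t, y2)) t := by
        rw [pd1_eq hv (t, y2)]
        exact hasDerivAt_slice1 hv y2 t
      have h2 : HasDerivAt (fun t' : ℝ => t' ^ 2 / 8) (t / 4) t := by
        have := (hasDerivAt_pow 2 t).div_const 8
        convert! this using 1
        simp
        ring
      have h3 : HasDerivAt (fun t' : ℝ => Real.exp (t' ^ 2 / 8))
          (Real.exp (t ^ 2 / 8) * (t / 4)) t := (Real.hasDerivAt_exp _).comp t h2
      have := h1.mul h3
      convert! this using 1
      ring
    have hFconst : F y1 = F 0 := by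
      apply is_const_of_deriv_eq_zero
      · intro t
        exact (hFd t).differentiableAt
      · intro t
        rw [(hFd t).deriv, hODE t y2 hy2]
        ring
    have : v (y1, y2) * Real.exp (y1 ^ 2 / 8) = v (0, y2) := by
      have h0 : F 0 = v (0, y2) := by simp [hF]
      rw [← h0]; exact hFconst
    calc v (y1, y2) = v (y1, y2) * Real.exp (y1 ^ 2 / 8) * Real.exp (-(y1 ^ 2) / 8) := by
          rw [mul_assoc, ← Real.exp_add, show y1 ^ 2 / 8 + -(y1 ^ 2) / 8 = 0 by ring,
            Real.exp_zero, mul_one]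
      _ = g y2 * Real.exp (-(y1 ^ 2) / 8) := by rw [this]
  -- boundary values of g
  have hga : g (-a) = 0 := by
    have heqon : Set.EqOn (fun y2 => v (-1, y2))
        (fun y2 => g y2 * Real.exp (-((-1 : ℝ) ^ 2) / 8)) (Set.Ioo (-a) a) := by
      intro y2 hy2
      exact hprod (-1) y2 hy2
    have hcl := heqon.closure
      (hv.continuous.comp (continuous_const.prodMk continuous_id))
      ((hgc1.continuous).mul continuous_const)
    rw [closure_Ioo (by linarith : -a ≠ a)] at hcl
    have := hcl (Set.mem_Icc.mpr ⟨le_refl (-a), by linarith⟩)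
    simp only at this
    rw [hbc1 (-1) (by norm_num)] at this
    have hE : Real.exp (-((-1 : ℝ) ^ 2) / 8) ≠ 0 := (Real.exp_pos _).ne'
    field_simp at this
    exact (mul_eq_zero.mp this.symm).resolve_right (Real.exp_pos _).ne'
  have hgb : g a = 0 := by
    have heqon : Set.EqOn (fun y2 => v (1, y2))
        (fun y2 => g y2 * Real.exp (-((1 : ℝ) ^ 2) / 8)) (Set.Ioo (-a) a) := by
      intro y2 hy2
      exact hprod 1 y2 hy2
    have hcl := heqon.closure
      (hv.continuous.comp (continuous_const.prodMk continuous_id))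
      ((hgc1.continuous).mul continuous_const)
    rw [closure_Ioo (by linarith : -a ≠ a)] at hcl
    have := hcl (Set.mem_Icc.mpr ⟨by linarith, le_refl a⟩)
    simp only at this
    rw [hbc2 1 (by norm_num)] at this
    have hE : Real.exp (-((1 : ℝ) ^ 2) / 8) ≠ 0 := (Real.exp_pos _).ne'
    field_simp at this
    exact (mul_eq_zero.mp this.symm).resolve_right (Real.exp_pos _).ne'
  -- pd2 on the strip
  have hpd2 : ∀ y1 y2 : ℝ, y2 ∈ Set.Ioo (-a) a →
      pd2 v (y1, y2) = deriv g y2 * Real.exp (-(y1 ^ 2) / 8) := by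
    intro y1 y2 hy2
    have hev : (fun t => v (y1, t)) =ᶠ[nhds y2]
        (fun t => g t * Real.exp (-(y1 ^ 2) / 8)) := by
      filter_upwards [isOpen_Ioo.mem_nhds hy2] with t ht
      exact hprod y1 t ht
    show deriv (fun t => v (y1, t)) y2 = _
    rw [hev.deriv_eq]
    rw [deriv_mul_const ((hgc1.differentiable one_ne_zero) y2)]
  -- compute the two integrals in product form
  set K : ℝ := ∫ y1 : ℝ, Real.exp (-(4⁻¹ : ℝ) * y1 ^ 2) with hK
  have hKval : K = Real.sqrt (π / 4⁻¹) := integral_gaussian (4⁻¹ : ℝ)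
  have hKpos : 0 < K := by
    rw [hKval]
    apply Real.sqrt_pos.mpr
    positivity
  have hsq_exp : ∀ y1 : ℝ, (Real.exp (-(y1 ^ 2) / 8)) ^ 2 = Real.exp (-(4⁻¹ : ℝ) * y1 ^ 2) := by
    intro y1
    rw [sq, ← Real.exp_add]
    congr 1
    ring
  have hIveq : (∫ p, (v p) ^ 2 ∂((volume : Measure ℝ).prod ν))
      = K * ∫ y2, (g y2) ^ 2 ∂ν := by
    rw [← hint_eq (fun p => (v p) ^ 2)]
    have hcongr : (∫ p in strip a, (v p) ^ 2)
        = ∫ p in strip a, (Real.exp (-(4⁻¹ : ℝ) * p.1 ^ 2) * (g p.2) ^ 2) := by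
      apply MeasureTheory.setIntegral_congr_fun (hstrip_open.measurableSet)
      intro p hp
      have := hprod p.1 p.2 hp.2
      simp only []
      rw [show v p = v (p.1, p.2) from by rw [Prod.mk.eta], this, ← hsq_exp p.1]
      ring
    rw [hcongr]
    show (∫ p, (Real.exp (-(4⁻¹ : ℝ) * p.1 ^ 2) * (g p.2) ^ 2)
        ∂((volume : Measure (ℝ × ℝ)).restrict (strip a))) = _
    rw [hres]
    rw [MeasureTheory.integral_prod_mul (f := fun y1 => Real.exp (-(4⁻¹ : ℝ) * y1 ^ 2))
      (g := fun y2 => (g y2) ^ 2)]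
  have hI2eq : (∫ p, (pd2 v p) ^ 2 ∂((volume : Measure ℝ).prod ν))
      = K * ∫ y2, (deriv g y2) ^ 2 ∂ν := by
    rw [← hint_eq (fun p => (pd2 v p) ^ 2)]
    have hcongr : (∫ p in strip a, (pd2 v p) ^ 2)
        = ∫ p in strip a, (Real.exp (-(4⁻¹ : ℝ) * p.1 ^ 2) * (deriv g p.2) ^ 2) := by
      apply MeasureTheory.setIntegral_congr_fun (hstrip_open.measurableSet)
      intro p hp
      have := hpd2 p.1 p.2 hp.2
      simp only []
      rw [show pd2 v p = pd2 v (p.1, p.2) from by rw [Prod.mk.eta], this, ← hsq_exp p.1]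
      ring
    rw [hcongr]
    show (∫ p, (Real.exp (-(4⁻¹ : ℝ) * p.1 ^ 2) * (deriv g p.2) ^ 2)
        ∂((volume : Measure (ℝ × ℝ)).restrict (strip a))) = _
    rw [hres]
    rw [MeasureTheory.integral_prod_mul (f := fun y1 => Real.exp (-(4⁻¹ : ℝ) * y1 ^ 2))
      (g := fun y2 => (deriv g y2) ^ 2)]
  -- deduce 1D equality and contradiction via cheap Dirichlet bound
  have h1d : (∫ y2 in (-a)..a, (deriv g y2) ^ 2) = E1 * ∫ y2 in (-a)..a, (g y2) ^ 2 := by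
    rw [hI2eq, hIveq] at hbr2zero
    rw [← conv, ← conv]
    have := hbr2zero
    rw [show E1 * (K * ∫ y2, (g y2) ^ 2 ∂ν) = K * (E1 * ∫ y2, (g y2) ^ 2 ∂ν) by ring] at this
    exact mul_left_cancel₀ hKpos.ne' this
  have hcheap := dirichlet_cheap a ha g hgc1 hga hgb
  have hgnn : 0 ≤ ∫ y2 in (-a)..a, (g y2) ^ 2 :=
    intervalIntegral.integral_nonneg (by linarith) fun _ _ => sq_nonneg _
  have hπ32 : a ^ 2 / 2 * E1 = π ^ 2 / 32 := by
    rw [hE1]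
    field_simp
    ring
  have hgzero : (∫ y2 in (-a)..a, (g y2) ^ 2) = 0 := by
    rw [h1d] at hcheap
    have hπb : π ^ 2 < 32 := by nlinarith [Real.pi_lt_d2, Real.pi_pos]
    nlinarith [hcheap, hgnn, hπ32]
  have hg0 := cont_sq_zero a ha g (hgc1.continuous) hgzero
  intro p hp
  rw [show v p = v (p.1, p.2) from by rw [Prod.mk.eta], hprod p.1 p.2 hp.2, hg0 p.2 hp.2]
  ring
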